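/- In the Hecke algebra H_n(q), the shifted generators σ_i(x) := σ_i + (q^{-x}/[x]_q)·1 satisfy the Yang–Baxter equation with spectral parameters: σ_i(x)·σ_{i+1}(x+y)·σ_i(y) = σ_{i+1}(y)·σ_i(x+y)·σ_{i+1}(x), for 1 ≤ i ≤ n−2 and integers x, y such that [x]_q, [y]_q, [x+y]_q are all nonzero. -/

import Mathlib

/-- The q-number `[k]_q = (q^k - q^{-k})/(q - q⁻¹)`. -/
noncomputable def qnum (q : ℂ) (k : ℤ) : ℂ := (q ^ k - q ^ (-k)) / (q - q⁻¹)

/-- The defining relations of the Hecke algebra of type `A_n` (with `n` generators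
`σ_1, …, σ_n`, i.e. the algebra `H_{n+1}(q)`). -/
inductive HeckeRel (q : ℂ) (n : ℕ) :
    FreeAlgebra ℂ (Fin n) → FreeAlgebra ℂ (Fin n) → Prop
  | braid (i j : Fin n) (h : (i : ℕ) + 1 = j) :
      HeckeRel q n (FreeAlgebra.ι ℂ i * FreeAlgebra.ι ℂ j * FreeAlgebra.ι ℂ i)
        (FreeAlgebra.ι ℂ j * FreeAlgebra.ι ℂ i * FreeAlgebra.ι ℂ j)
  | comm (i j : Fin n) (h : (i : ℕ) + 2 ≤ j) :
      HeckeRel q n (FreeAlgebra.ι ℂ i * FreeAlgebra.ι ℂ j)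
        (FreeAlgebra.ι ℂ j * FreeAlgebra.ι ℂ i)
  | hecke (i : Fin n) :
      HeckeRel q n (FreeAlgebra.ι ℂ i * FreeAlgebra.ι ℂ i)
        (1 + (q - q⁻¹) • FreeAlgebra.ι ℂ i)

/-- The Hecke algebra `H_{n+1}(q)` of type `A_n`. -/
abbrev HeckeAlgebra (q : ℂ) (n : ℕ) := RingQuot (HeckeRel q n)

/-- The generator `σ_i` of the Hecke algebra. -/
noncomputable def heckeGen (q : ℂ) (n : ℕ) (i : Fin n) : HeckeAlgebra q n :=
  RingQuot.mkAlgHom ℂ (HeckeRel q n) (FreeAlgebra.ι ℂ i)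

/-- The shifted generator `σ_i(x) := σ_i + (q^{-x}/[x]_q)·1`. -/
noncomputable def heckeGenShift (q : ℂ) (n : ℕ) (i : Fin n) (x : ℤ) : HeckeAlgebra q n :=
  heckeGen q n i + (q ^ (-x) / qnum q x) • 1

/-- Abstract Yang–Baxter computation in any ℂ-algebra with braid and Hecke relations. -/
lemma yb_aux {A : Type*} [Ring A] [Algebra ℂ A] (a b : A) (c u v w : ℂ)
    (hbraid : a*b*a = b*a*b) (ha : a*a = 1 + c•a) (hb : b*b = 1 + c•b)
    (hkey : w*c + w*u + w*v = u*v) :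
    (a + u•1)*(b + w•1)*(a + v•1) = (b + v•1)*(a + w•1)*(b + u•1) := by
  simp only [mul_add, add_mul, smul_mul_assoc, mul_smul_comm, smul_smul, mul_one, one_mul]
  rw [ha, hb, hbraid]
  simp only [smul_add, smul_smul]
  match_scalars
  · ring
  · ring
  · ring
  · linear_combination hkey
  · ring
  · linear_combination -hkey

/-- The scalar identity underlying the spectral-parameter Yang–Baxter equation. -/
lemma yb_key (d A B : ℂ) (hA : A ≠ 0) (hB : B ≠ 0)
    (hX : A - A⁻¹ ≠ 0) (hY : B - B⁻¹ ≠ 0) (hXY : A * B - (A * B)⁻¹ ≠ 0) :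
    ((A*B)⁻¹ / ((A*B - (A*B)⁻¹)/d)) * d
      + ((A*B)⁻¹ / ((A*B - (A*B)⁻¹)/d)) * (A⁻¹ / ((A - A⁻¹)/d))
      + ((A*B)⁻¹ / ((A*B - (A*B)⁻¹)/d)) * (B⁻¹ / ((B - B⁻¹)/d))
      = (A⁻¹ / ((A - A⁻¹)/d)) * (B⁻¹ / ((B - B⁻¹)/d)) := by
  have hAB : A * B ≠ 0 := mul_ne_zero hA hB
  have hP : A^2 - 1 ≠ 0 := by
    intro h; apply hX; field_simp; linear_combination h
  have hQ : B^2 - 1 ≠ 0 := by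
    intro h; apply hY; field_simp; linear_combination h
  have hR : A^2*B^2 - 1 ≠ 0 := by
    intro h; apply hXY; field_simp; linear_combination h
  have e1 : A - A⁻¹ = (A^2 - 1)/A := by field_simp
  have e2 : B - B⁻¹ = (B^2 - 1)/B := by field_simp
  have e3 : A*B - (A*B)⁻¹ = (A^2*B^2 - 1)/(A*B) := by field_simp
  rw [e1, e2, e3]
  rcases eq_or_ne d 0 with rfl | hd
  · simp
  · field_simp
    ring

/-- Yang–Baxter equation with spectral parameters for the shifted Hecke generators:
`σ_i(x)·σ_{i+1}(x+y)·σ_i(y) = σ_{i+1}(y)·σ_i(x+y)·σ_{i+1}(x)`. -/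
theorem heckeGenShift_yangBaxter (q : ℂ) (hq : q ≠ 0) (n : ℕ) (i : Fin n)
    (h : (i : ℕ) + 1 < n) (x y : ℤ)
    (hx : qnum q x ≠ 0) (hy : qnum q y ≠ 0) (hxy : qnum q (x + y) ≠ 0) :
    heckeGenShift q n i x * heckeGenShift q n ⟨(i : ℕ) + 1, h⟩ (x + y)
        * heckeGenShift q n i y
      = heckeGenShift q n ⟨(i : ℕ) + 1, h⟩ y * heckeGenShift q n i (x + y)
        * heckeGenShift q n ⟨(i : ℕ) + 1, h⟩ x := by
  set a := heckeGen q n i with ha_def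
  set b := heckeGen q n ⟨(i : ℕ) + 1, h⟩ with hb_def
  have hbraid : a * b * a = b * a * b := by
    have := RingQuot.mkAlgHom_rel ℂ (HeckeRel.braid (q := q) i ⟨(i : ℕ) + 1, h⟩ rfl)
    simpa [ha_def, hb_def, heckeGen, map_mul] using this
  have ha : a * a = 1 + (q - q⁻¹) • a := by
    have := RingQuot.mkAlgHom_rel ℂ (HeckeRel.hecke (q := q) (n := n) i)
    simpa [ha_def, heckeGen, map_mul, map_add, map_one, map_smul] using this
  have hb : b * b = 1 + (q - q⁻¹) • b := by
    have := RingQuot.mkAlgHom_rel ℂ (HeckeRel.hecke (q := q) (n := n) ⟨(i : ℕ) + 1, h⟩)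
    simpa [hb_def, heckeGen, map_mul, map_add, map_one, map_smul] using this
  -- nonvanishing facts
  have hA : q ^ x ≠ 0 := zpow_ne_zero _ hq
  have hB : q ^ y ≠ 0 := zpow_ne_zero _ hq
  have hX : q ^ x - (q ^ x)⁻¹ ≠ 0 := by
    intro hz; apply hx; simp [qnum, zpow_neg, hz]
  have hY : q ^ y - (q ^ y)⁻¹ ≠ 0 := by
    intro hz; apply hy; simp [qnum, zpow_neg, hz]
  have hXY : q ^ x * q ^ y - (q ^ x * q ^ y)⁻¹ ≠ 0 := by
    intro hz; apply hxy; simp [qnum, zpow_neg, zpow_add₀ hq]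
    exact Or.inl (by rw [mul_inv] at hz; linear_combination hz)
  -- translate the scalar coefficients
  have hu : q ^ (-x) / qnum q x = (q ^ x)⁻¹ / ((q ^ x - (q ^ x)⁻¹) / (q - q⁻¹)) := by
    simp [qnum, zpow_neg]
  have hv : q ^ (-y) / qnum q y = (q ^ y)⁻¹ / ((q ^ y - (q ^ y)⁻¹) / (q - q⁻¹)) := by
    simp [qnum, zpow_neg]
  have hw : q ^ (-(x + y)) / qnum q (x + y)
      = (q ^ x * q ^ y)⁻¹ / ((q ^ x * q ^ y - (q ^ x * q ^ y)⁻¹) / (q - q⁻¹)) := by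
    simp [qnum, zpow_neg, zpow_add₀ hq]
  have hkey : (q ^ (-(x + y)) / qnum q (x + y)) * (q - q⁻¹)
      + (q ^ (-(x + y)) / qnum q (x + y)) * (q ^ (-x) / qnum q x)
      + (q ^ (-(x + y)) / qnum q (x + y)) * (q ^ (-y) / qnum q y)
      = (q ^ (-x) / qnum q x) * (q ^ (-y) / qnum q y) := by
    rw [hu, hv, hw]
    exact yb_key (q - q⁻¹) (q ^ x) (q ^ y) hA hB hX hY hXY
  simpa [heckeGenShift, ha_def, hb_def] using
    yb_aux a b (q - q⁻¹) (q ^ (-x) / qnum q x) (q ^ (-y) / qnum q y)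
      (q ^ (-(x + y)) / qnum q (x + y)) hbraid ha hb hkey
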